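/- Let β ∈ (0,1], λ > 0, t > 0 and u ∈ [0,1]. Then the probability generating function of the fractional Poisson process satisfies ∑_{n=0}^∞ u^n p_β(n|t,λ) = E_β(−λ t^β (1−u)), where E_β is the Mittag-Leffler function. -/

import Mathlib

open Real

/-- pmf of the fractional Poisson process. -/
noncomputable def fracPoissonPMF (β lam t : ℝ) (n : ℕ) : ℝ :=
  (lam * t ^ β) ^ n / n.factorial *
    ∑' k : ℕ, ((n + k).factorial / k.factorial : ℝ) * (-(lam * t ^ β)) ^ k /
      Real.Gamma (β * ((k : ℝ) + n) + 1)

/-- Mittag-Leffler function. -/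
noncomputable def mittagLeffler (β z : ℝ) : ℝ :=
  ∑' k : ℕ, z ^ k / Real.Gamma (β * k + 1)

private lemma pow_sub_le_fact (M : ℕ) : ∀ j : ℕ, M ≤ j → M ^ (j - M) ≤ j.factorial := by
  intro j
  induction j with
  | zero => intro h; simp [Nat.le_zero.mp h]
  | succ j ih =>
    intro h
    rcases Nat.lt_or_ge j M with h2 | h2
    · have hMj : M = j + 1 := le_antisymm h h2
      simp only [hMj, Nat.sub_self, pow_zero]
      exact Nat.factorial_pos _
    · have h3 := ih h2
      have hsub : j + 1 - M = (j - M) + 1 := by omega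
      rw [hsub, pow_succ]
      calc M ^ (j - M) * M ≤ j.factorial * (j + 1) := Nat.mul_le_mul h3 (by omega)
        _ = (j + 1).factorial := by rw [Nat.factorial_succ]; ring

private lemma summable_ml {β : ℝ} (hβ : 0 < β) {c : ℝ} (hc : 0 ≤ c) :
    Summable (fun m : ℕ => c ^ m / Real.Gamma (β * m + 1)) := by
  set c' : ℝ := max c 1 with hc'def
  have hc'1 : (1 : ℝ) ≤ c' := le_max_right _ _
  have hc'0 : (0 : ℝ) < c' := lt_of_lt_of_le one_pos hc'1
  obtain ⟨M, hM2, hMβ⟩ : ∃ M : ℕ, 2 ≤ M ∧ 2 * c' ≤ (M : ℝ) ^ β := by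
    obtain ⟨M, hM⟩ := exists_nat_ge (max 2 ((2 * c') ^ (1 / β)))
    refine ⟨M, by exact_mod_cast le_trans (le_max_left _ _) hM, ?_⟩
    have h1 : (2 * c') ^ (1 / β) ≤ (M : ℝ) := le_trans (le_max_right _ _) hM
    have h2 : ((2 * c') ^ (1 / β)) ^ β ≤ (M : ℝ) ^ β :=
      Real.rpow_le_rpow (Real.rpow_nonneg (by positivity) _) h1 hβ.le
    rwa [← Real.rpow_mul (by positivity), one_div, inv_mul_cancel₀ hβ.ne', Real.rpow_one] at h2
  have hM0 : (0 : ℝ) < M := by exact_mod_cast Nat.lt_of_lt_of_le two_pos hM2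
  have hM1 : (1 : ℝ) ≤ M := by exact_mod_cast Nat.one_le_of_lt (Nat.lt_of_lt_of_le one_lt_two hM2)
  set N := ⌈((M : ℝ) + 1) / β⌉₊ with hN
  have key : ∀ m : ℕ, N ≤ m →
      c ^ m / Real.Gamma (β * m + 1) ≤ (M : ℝ) ^ (M + 1) * (1 / 2) ^ m := by
    intro m hm
    have hβm : (M : ℝ) + 1 ≤ β * m := by
      have h1 : ((M : ℝ) + 1) / β ≤ (N : ℝ) := Nat.le_ceil _
      have hNm : (N : ℝ) ≤ m := by exact_mod_cast hm
      have := (div_le_iff₀ hβ).mp (h1.trans hNm)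
      linarith [this]
    set j := ⌊β * (m : ℝ)⌋₊ with hj
    have hβm0 : (0 : ℝ) ≤ β * m := by positivity
    have hjle : (j : ℝ) ≤ β * m := Nat.floor_le hβm0
    have hjlt : β * m < j + 1 := Nat.lt_floor_add_one _
    have hMj : M ≤ j := by
      by_contra hcon
      push_neg at hcon
      have : (j : ℝ) + 1 ≤ (M : ℝ) := by exact_mod_cast hcon
      linarith
    have hMjr : (M : ℝ) ≤ (j : ℝ) := by exact_mod_cast hMj
    have hG : (j.factorial : ℝ) ≤ Real.Gamma (β * m + 1) := by
      rw [← Real.Gamma_nat_eq_factorial j]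
      apply Real.Gamma_strictMonoOn_Ici.monotoneOn
      · have : (2 : ℝ) ≤ M := by exact_mod_cast hM2
        simp only [Set.mem_Ici]; linarith
      · simp only [Set.mem_Ici]; linarith
      · linarith
    have hfact : (M : ℝ) ^ (j - M) ≤ (j.factorial : ℝ) := by
      exact_mod_cast pow_sub_le_fact M j hMj
    have hpow : (2 * c') ^ m / (M : ℝ) ^ (M + 1) ≤ (M : ℝ) ^ (j - M) := by
      have h2 : (2 * c') ^ m ≤ (M : ℝ) ^ j * M := by
        have ha : (2 * c') ^ m ≤ ((M : ℝ) ^ β) ^ m := pow_le_pow_left₀ (by positivity) hMβ m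
        have hb : ((M : ℝ) ^ β) ^ m = (M : ℝ) ^ (β * (m : ℝ)) := by
          rw [← Real.rpow_natCast ((M : ℝ) ^ β) m, ← Real.rpow_mul hM0.le]
        have hcc : (M : ℝ) ^ (β * (m : ℝ)) ≤ (M : ℝ) ^ ((j : ℝ) + 1) :=
          Real.rpow_le_rpow_of_exponent_le hM1 (by linarith)
        have hd : (M : ℝ) ^ ((j : ℝ) + 1) = (M : ℝ) ^ j * M := by
          rw [Real.rpow_add hM0, Real.rpow_one, Real.rpow_natCast]
        calc (2 * c') ^ m ≤ ((M : ℝ) ^ β) ^ m := ha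
          _ = (M : ℝ) ^ (β * (m : ℝ)) := hb
          _ ≤ (M : ℝ) ^ ((j : ℝ) + 1) := hcc
          _ = (M : ℝ) ^ j * M := hd
      rw [pow_sub₀ _ hM0.ne' hMj, ← div_eq_mul_inv,
        div_le_div_iff₀ (by positivity) (by positivity)]
      calc (2 * c') ^ m * (M : ℝ) ^ M ≤ ((M : ℝ) ^ j * M) * (M : ℝ) ^ M :=
            mul_le_mul_of_nonneg_right h2 (by positivity)
        _ = (M : ℝ) ^ j * (M : ℝ) ^ (M + 1) := by rw [pow_succ]; ring
    have hΓpos : 0 < Real.Gamma (β * m + 1) := Real.Gamma_pos_of_pos (by linarith)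
    have hbpos : 0 < (2 * c') ^ m / (M : ℝ) ^ (M + 1) := by positivity
    have hb2 : (2 * c') ^ m / (M : ℝ) ^ (M + 1) ≤ Real.Gamma (β * m + 1) :=
      hpow.trans (hfact.trans hG)
    calc c ^ m / Real.Gamma (β * m + 1)
        ≤ c' ^ m / ((2 * c') ^ m / (M : ℝ) ^ (M + 1)) :=
          div_le_div₀ (by positivity) (pow_le_pow_left₀ hc (le_max_left c 1) m) hbpos hb2
      _ = (M : ℝ) ^ (M + 1) * (1 / 2) ^ m := by
          rw [mul_pow, div_pow, div_div_eq_mul_div]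
          field_simp
          ring
  rw [← summable_nat_add_iff N]
  have hsummand : Summable (fun m : ℕ => (M : ℝ) ^ (M + 1) * (1 / 2) ^ (m + N)) := by
    have h := (summable_geometric_of_lt_one (by norm_num : (0:ℝ) ≤ 1/2)
      (by norm_num : (1:ℝ)/2 < 1)).mul_left ((M : ℝ) ^ (M + 1) * (1 / 2) ^ N)
    refine h.congr fun m => ?_
    rw [pow_add]
    ring
  refine Summable.of_nonneg_of_le (fun m => ?_) (fun m => key (m + N) (Nat.le_add_left N m))
    hsummand
  have h1 : 0 < β * ((m + N : ℕ) : ℝ) + 1 := by positivity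
  have := Real.Gamma_pos_of_pos h1
  positivity

set_option maxHeartbeats 1000000 in
theorem fpp_pgf (β lam t u : ℝ) (hβ : β ∈ Set.Ioc (0 : ℝ) 1) (hlam : 0 < lam)
    (ht : 0 < t) (hu : u ∈ Set.Icc (0 : ℝ) 1) :
    ∑' n : ℕ, u ^ n * fracPoissonPMF β lam t n
      = mittagLeffler β (-(lam * t ^ β * (1 - u))) := by
  obtain ⟨hβ0, hβ1⟩ := hβ
  obtain ⟨hu0, hu1⟩ := hu
  set x : ℝ := lam * t ^ β with hxdef
  have hx : 0 < x := mul_pos hlam (Real.rpow_pos_of_pos ht β)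
  set F : ℕ × ℕ → ℝ := fun p =>
    u ^ p.1 * (x ^ p.1 / p.1.factorial) *
      (((p.1 + p.2).factorial / p.2.factorial : ℝ) * (-x) ^ p.2 /
        Real.Gamma (β * ((p.2 : ℝ) + p.1) + 1)) with hFdef
  have hFeq : ∀ n k : ℕ, F (n, k) =
      ((n + k).choose n : ℝ) * ((u * x) ^ n * (-x) ^ k) /
        Real.Gamma (β * ((n + k : ℕ) : ℝ) + 1) := by
    intro n k
    have h2 : ((n + k).choose n * n.factorial * k.factorial : ℕ) = (n + k).factorial := by
      simpa [Nat.add_sub_cancel_left] using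
        Nat.choose_mul_factorial_mul_factorial (Nat.le_add_right n k)
    have hfac : ((n + k).factorial : ℝ) / k.factorial = ((n + k).choose n : ℝ) * n.factorial := by
      rw [div_eq_iff (by exact_mod_cast (Nat.factorial_pos k).ne' : (k.factorial : ℝ) ≠ 0)]
      exact_mod_cast h2.symm
    have hcast : ((k : ℝ) + n) = ((n + k : ℕ) : ℝ) := by push_cast; ring
    have hn : (n.factorial : ℝ) ≠ 0 := by exact_mod_cast (Nat.factorial_pos n).ne'
    simp only [hFdef, hfac, hcast]
    field_simp
    ring
  have hΓ : ∀ m : ℕ, 0 < Real.Gamma (β * (m : ℝ) + 1) := fun m =>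
    Real.Gamma_pos_of_pos (by positivity)
  have habs_le : ∀ m : ℕ, ∀ p ∈ Finset.HasAntidiagonal.antidiagonal m,
      |F p| ≤ (m.choose p.1 : ℝ) * x ^ m / Real.Gamma (β * m + 1) := by
    intro m p hp
    obtain ⟨n, k⟩ := p
    have hnk : n + k = m := Finset.HasAntidiagonal.mem_antidiagonal.mp hp
    rw [hFeq n k, hnk]
    rw [abs_div, abs_of_pos (hΓ m), abs_mul, abs_mul, abs_pow, abs_pow, abs_neg,
      abs_of_pos hx, Nat.abs_cast, abs_of_nonneg (by positivity : (0:ℝ) ≤ u * x)]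
    have hle : (u * x) ^ n * x ^ k ≤ x ^ m := by
      rw [← hnk, pow_add]
      have h1 : (u * x) ^ n ≤ x ^ n :=
        pow_le_pow_left₀ (by positivity) (by nlinarith) n
      exact mul_le_mul_of_nonneg_right h1 (by positivity)
    gcongr
  have hrow : ∀ m : ℕ, ∑ p ∈ Finset.HasAntidiagonal.antidiagonal m, F p
      = (-(x * (1 - u))) ^ m / Real.Gamma (β * m + 1) := by
    intro m
    rw [Finset.Nat.sum_antidiagonal_eq_sum_range_succ_mk]
    have hterm : ∀ n ∈ Finset.range (m + 1), F (n, m - n)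
        = (u * x) ^ n * (-x) ^ (m - n) * (m.choose n : ℝ) / Real.Gamma (β * m + 1) := by
      intro n hn
      have hnm : n ≤ m := Nat.lt_succ_iff.mp (Finset.mem_range.mp hn)
      have hnk : n + (m - n) = m := Nat.add_sub_cancel' hnm
      rw [hFeq n (m - n), hnk]
      ring
    rw [Finset.sum_congr rfl hterm, ← Finset.sum_div, ← add_pow]
    congr 2
    ring
  have hsum_fiber : ∀ m : ℕ, ∑ p ∈ Finset.HasAntidiagonal.antidiagonal m, |F p|
      ≤ (2 * x) ^ m / Real.Gamma (β * m + 1) := by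
    intro m
    calc ∑ p ∈ Finset.HasAntidiagonal.antidiagonal m, |F p|
        ≤ ∑ p ∈ Finset.HasAntidiagonal.antidiagonal m, (m.choose p.1 : ℝ) * x ^ m / Real.Gamma (β * m + 1) :=
          Finset.sum_le_sum (habs_le m)
      _ = (∑ p ∈ Finset.HasAntidiagonal.antidiagonal m, (m.choose p.1 : ℝ)) * (x ^ m / Real.Gamma (β * m + 1)) := by
          rw [Finset.sum_mul]
          exact Finset.sum_congr rfl fun p _ => by rw [mul_div_assoc]
      _ = (2 : ℝ) ^ m * (x ^ m / Real.Gamma (β * m + 1)) := by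
          congr 1
          rw [Finset.Nat.sum_antidiagonal_eq_sum_range_succ_mk]
          exact_mod_cast Nat.sum_range_choose m
      _ = (2 * x) ^ m / Real.Gamma (β * m + 1) := by rw [mul_pow]; ring
  set e := Finset.HasAntidiagonal.sigmaAntidiagonalEquivProd (A := ℕ) with hedef
  have hGsum : Summable (fun σ : Σ m : ℕ, (Finset.HasAntidiagonal.antidiagonal m : Finset (ℕ × ℕ)) =>
      |F (e σ)|) := by
    rw [summable_sigma_of_nonneg (fun _ => abs_nonneg _)]
    constructor
    · intro m
      exact Summable.of_finite
    · apply Summable.of_nonneg_of_le (fun m => tsum_nonneg fun _ => abs_nonneg _) ?_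
        (summable_ml hβ0 (by positivity : (0:ℝ) ≤ 2 * x))
      intro m
      simp only [hedef, Finset.HasAntidiagonal.sigmaAntidiagonalEquivProd_apply]
      calc (∑' p : (Finset.HasAntidiagonal.antidiagonal m : Finset (ℕ × ℕ)), |F ↑p|)
          = ∑ p ∈ Finset.HasAntidiagonal.antidiagonal m, |F p| :=
            Finset.tsum_subtype (Finset.HasAntidiagonal.antidiagonal m) (fun q => |F q|)
        _ ≤ (2 * x) ^ m / Real.Gamma (β * m + 1) := hsum_fiber m
  have hFsum : Summable F := by
    have h1 : Summable fun p : ℕ × ℕ => |F p| := e.summable_iff.mp hGsum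
    exact h1.of_abs
  have hstep : ∀ n : ℕ, u ^ n * fracPoissonPMF β lam t n = ∑' k, F (n, k) := by
    intro n
    rw [fracPoissonPMF, ← mul_assoc, ← tsum_mul_left]
  calc ∑' n : ℕ, u ^ n * fracPoissonPMF β lam t n
      = ∑' n, ∑' k, F (n, k) := tsum_congr hstep
    _ = ∑' p : ℕ × ℕ, F p := (Summable.tsum_prod hFsum).symm
    _ = ∑' σ : Σ m : ℕ, (Finset.HasAntidiagonal.antidiagonal m : Finset (ℕ × ℕ)), F (e σ) :=
        (e.tsum_eq F).symm
    _ = ∑' m : ℕ, ∑' p : (Finset.HasAntidiagonal.antidiagonal m : Finset (ℕ × ℕ)), F (e ⟨m, p⟩) :=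
        Summable.tsum_sigma (e.summable_iff.mpr hFsum)
    _ = ∑' m : ℕ, ∑ p ∈ Finset.HasAntidiagonal.antidiagonal m, F p := by
        refine tsum_congr fun m => ?_
        simp only [hedef, Finset.HasAntidiagonal.sigmaAntidiagonalEquivProd_apply]
        exact Finset.tsum_subtype (Finset.HasAntidiagonal.antidiagonal m) F
    _ = ∑' m : ℕ, (-(x * (1 - u))) ^ m / Real.Gamma (β * m + 1) := tsum_congr hrow
    _ = mittagLeffler β (-(x * (1 - u))) := by rw [mittagLeffler]
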